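/- De Moivre's formula for spacelike split quaternions, odd exponent: let u = (u₁, u₂, u₃) satisfy -u₁² + u₂² + u₃² = 1, ε = u₁i + u₂j + u₃k, N > 0, θ ∈ ℝ, and q = N(sinh θ + ε cosh θ). Then for every odd natural number n, (L_q)ⁿ = Nⁿ (sinh(nθ) I₄ + cosh(nθ) L_ε). -/

import Mathlib

open Matrix Real

namespace SplitQuat

noncomputable def L (q : QuaternionAlgebra ℝ (-1) 0 1) : Matrix (Fin 4) (Fin 4) ℝ :=
  !![q.re, -q.imI, q.imJ, q.imK;
     q.imI, q.re, q.imK, -q.imJ;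
     q.imJ, q.imK, q.re, -q.imI;
     q.imK, -q.imJ, q.imI, q.re]

noncomputable def R (q : QuaternionAlgebra ℝ (-1) 0 1) : Matrix (Fin 4) (Fin 4) ℝ :=
  !![q.re, -q.imI, q.imJ, q.imK;
     q.imI, q.re, -q.imK, q.imJ;
     q.imJ, -q.imK, q.re, q.imI;
     q.imK, q.imJ, -q.imI, q.re]

lemma L_mul (p q : QuaternionAlgebra ℝ (-1) 0 1) : L (p * q) = L p * L q := by
  ext i j
  fin_cases i <;> fin_cases j <;>
    simp [L, Matrix.mul_apply, Fin.sum_univ_four, QuaternionAlgebra.re_mul,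
      QuaternionAlgebra.imI_mul, QuaternionAlgebra.imJ_mul, QuaternionAlgebra.imK_mul] <;> ring

lemma L_one : L (1 : QuaternionAlgebra ℝ (-1) 0 1) = 1 := by
  ext i j
  fin_cases i <;> fin_cases j <;> simp [L, Matrix.one_apply, Matrix.vecHead, Matrix.vecTail]

lemma L_pow (q : QuaternionAlgebra ℝ (-1) 0 1) (n : ℕ) : L (q ^ n) = (L q) ^ n := by
  induction n with
  | zero => simpa using L_one
  | succ n ih => rw [pow_succ, pow_succ, L_mul, ih]

lemma qpow (u₁ u₂ u₃ : ℝ) (h : -u₁ ^ 2 + u₂ ^ 2 + u₃ ^ 2 = 1) (N θ : ℝ) (k : ℕ) :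
    (⟨N * Real.sinh θ, N * u₁ * Real.cosh θ, N * u₂ * Real.cosh θ, N * u₃ * Real.cosh θ⟩ :
      QuaternionAlgebra ℝ (-1) 0 1) ^ (2 * k + 1) =
    ⟨N ^ (2*k+1) * Real.sinh ((2*k+1) * θ), N ^ (2*k+1) * u₁ * Real.cosh ((2*k+1) * θ),
     N ^ (2*k+1) * u₂ * Real.cosh ((2*k+1) * θ), N ^ (2*k+1) * u₃ * Real.cosh ((2*k+1) * θ)⟩ := by
  induction k with
  | zero => simp
  | succ k ih =>
    have h2 : 2 * (k+1) + 1 = (2*k+1) + 2 := by ring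
    rw [h2, pow_add, ih, pow_two]
    set A : ℝ := (2*(k:ℝ)+1) * θ with hA
    have e1 : ((2:ℝ) * ((k:ℝ)+1) + 1) * θ = A + θ + θ := by rw [hA]; ring
    ext <;> push_cast <;> rw [e1] <;>
      simp only [QuaternionAlgebra.re_mul, QuaternionAlgebra.imI_mul, QuaternionAlgebra.imJ_mul,
        QuaternionAlgebra.imK_mul, Real.sinh_add, Real.cosh_add]
    · linear_combination (N ^ (2*k+1) * N^2 * (Real.sinh A * Real.cosh θ^2 +
        2 * Real.cosh A * Real.sinh θ * Real.cosh θ)) * h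
    · linear_combination (N ^ (2*k+1) * N^2 * u₁ * Real.cosh A * Real.cosh θ^2) * h
    · linear_combination (N ^ (2*k+1) * N^2 * u₂ * Real.cosh A * Real.cosh θ^2) * h
    · linear_combination (N ^ (2*k+1) * N^2 * u₃ * Real.cosh A * Real.cosh θ^2) * h

theorem deMoivre_L_spacelikeQ_odd (u₁ u₂ u₃ : ℝ) (h : -u₁ ^ 2 + u₂ ^ 2 + u₃ ^ 2 = 1)
    (N θ : ℝ) (hN : 0 < N)
    (q : QuaternionAlgebra ℝ (-1) 0 1)
    (hq : q = ⟨N * Real.sinh θ, N * u₁ * Real.cosh θ, N * u₂ * Real.cosh θ, N * u₃ * Real.cosh θ⟩)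
    (n : ℕ) (hn : Odd n) :
    (L q) ^ n = N ^ n • (Real.sinh (n * θ) • (1 : Matrix (Fin 4) (Fin 4) ℝ) +
      Real.cosh (n * θ) • L ⟨0, u₁, u₂, u₃⟩) := by
  obtain ⟨k, hk⟩ := hn
  subst hq
  have hk' : n = 2 * k + 1 := by omega
  subst hk'
  rw [← L_pow, qpow u₁ u₂ u₃ h N θ k]
  ext i j
  fin_cases i <;> fin_cases j <;>
    simp [L, Matrix.one_apply, Matrix.smul_apply] <;> push_cast <;> ring
end SplitQuat
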